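/- Let L be a rank-l primitive sublattice of Z^n with l < n, let E be the subspace spanned by L, and let pi be the orthogonal projection onto the orthogonal complement of E. Then the diameter of the Voronoi cell of the factor lattice pi(Z^n) is at most sqrt(n - l). -/

import Mathlib

open scoped BigOperators

/-- Euclidean dot product. -/
def dotp {d : ℕ} (x y : Fin d → ℝ) : ℝ := ∑ i, x i * y i

/-- Euclidean norm. -/
noncomputable def euclNorm {d : ℕ} (x : Fin d → ℝ) : ℝ := Real.sqrt (dotp x x)

lemma dotp_self_nonneg {d : ℕ} (x : Fin d → ℝ) : 0 ≤ dotp x x :=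
  Finset.sum_nonneg fun i _ => mul_self_nonneg _

lemma dotp_self_eq_zero {d : ℕ} {x : Fin d → ℝ} (h : dotp x x = 0) : x = 0 := by
  funext i
  have := (Finset.sum_eq_zero_iff_of_nonneg
    (fun i _ => mul_self_nonneg (x i))).mp h i (Finset.mem_univ i)
  simpa [mul_self_eq_zero] using this

lemma dotp_add_self {d : ℕ} (a b : Fin d → ℝ) :
    dotp (a + b) (a + b) = dotp a a + 2 * dotp a b + dotp b b := by
  have : ∀ i, (a i + b i) * (a i + b i)
      = a i * a i + 2 * (a i * b i) + b i * b i := fun i => by ring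
  simp [dotp, this, Finset.sum_add_distrib, Finset.mul_sum]

lemma dotp_sub_left {d : ℕ} (a b c : Fin d → ℝ) :
    dotp (a - b) c = dotp a c - dotp b c := by
  simp [dotp, sub_mul, Finset.sum_sub_distrib]

lemma euclNorm_eq {d : ℕ} (x : Fin d → ℝ) :
    euclNorm x = ‖(WithLp.equiv 2 (Fin d → ℝ)).symm x‖ := by
  rw [EuclideanSpace.norm_eq]
  simp [euclNorm, dotp, ← sq, sq_abs]

lemma euclNorm_sub_le {d : ℕ} (a b : Fin d → ℝ) : euclNorm (a - b) ≤ euclNorm a + euclNorm b := by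
  simp only [euclNorm_eq]
  rw [show (WithLp.equiv 2 (Fin d → ℝ)).symm (a - b)
      = (WithLp.equiv 2 (Fin d → ℝ)).symm a - (WithLp.equiv 2 (Fin d → ℝ)).symm b from rfl]
  exact norm_sub_le _ _

lemma euclNorm_mono {d : ℕ} {a b : Fin d → ℝ} (h : dotp a a ≤ dotp b b) : euclNorm a ≤ euclNorm b :=
  Real.sqrt_le_sqrt h

lemma exists_S {n l : ℕ} (E : Submodule ℝ (Fin n → ℝ)) (hrank : Module.finrank ℝ E = l) :
    ∃ S : Finset (Fin n), S.card = l ∧ ∀ t : Fin n → ℝ, ∃ e ∈ E, ∀ j ∈ S, e j = t j := by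
  suffices h : ∀ k, k ≤ l → ∃ S : Finset (Fin n), S.card = k ∧
      ∀ t : Fin n → ℝ, ∃ e ∈ E, ∀ j ∈ S, e j = t j from h l le_rfl
  intro k
  induction k with
  | zero => exact fun _ => ⟨∅, rfl, fun t => ⟨0, E.zero_mem, by simp⟩⟩
  | succ k ih =>
    intro hk
    obtain ⟨S, hcard, hsurj⟩ := ih (Nat.le_of_succ_le hk)
    have hex : ∃ e : Fin n → ℝ, e ∈ E ∧ e ≠ 0 ∧ ∀ j ∈ S, e j = 0 := by
      by_contra hcon
      push_neg at hcon
      let φ : E →ₗ[ℝ] (S → ℝ) :=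
        { toFun := fun e j => (e : Fin n → ℝ) (j : Fin n)
          map_add' := fun a b => rfl
          map_smul' := fun c a => rfl }
      have hinj : Function.Injective φ := by
        rw [← LinearMap.ker_eq_bot]
        apply LinearMap.ker_eq_bot'.mpr
        intro m hm
        by_contra hm0
        have hmE : (m : Fin n → ℝ) ∈ E := m.2
        have hmne : (m : Fin n → ℝ) ≠ 0 := by
          simpa [Submodule.coe_eq_zero] using hm0
        obtain ⟨j, hjS, hjne⟩ := hcon _ hmE hmne
        exact hjne (congrFun hm ⟨j, hjS⟩)
      have hle : Module.finrank ℝ E ≤ Module.finrank ℝ (S → ℝ) :=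
        LinearMap.finrank_le_finrank_of_injective hinj
      rw [hrank, Module.finrank_pi, Fintype.card_coe, hcard] at hle
      omega
    obtain ⟨e, heE, hene, heS⟩ := hex
    obtain ⟨i, hi⟩ := Function.ne_iff.mp hene
    have hiS : i ∉ S := fun h => hi (by simpa using heS i h)
    refine ⟨insert i S, by rw [Finset.card_insert_of_notMem hiS, hcard], ?_⟩
    intro t
    obtain ⟨e₀, he₀E, he₀⟩ := hsurj t
    refine ⟨e₀ + ((t i - e₀ i) / e i) • e,
      E.add_mem he₀E (E.smul_mem _ heE), ?_⟩
    intro j hj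
    rcases Finset.mem_insert.mp hj with h | h
    · subst h
      have hne : e j ≠ 0 := by simpa using hi
      simp only [Pi.add_apply, Pi.smul_apply, smul_eq_mul]
      field_simp
      ring
    · have : e j = 0 := heS j h
      simp [Pi.add_apply, Pi.smul_apply, smul_eq_mul, this, he₀ j h]

theorem stmt1 {n l : ℕ} (hl : l < n)
    (L : Submodule ℤ (Fin n → ℝ))
    (hint : ∀ x ∈ L, ∀ i, ∃ m : ℤ, x i = m)
    (E : Submodule ℝ (Fin n → ℝ))
    (hE : E = Submodule.span ℝ (L : Set (Fin n → ℝ)))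
    (hrank : Module.finrank ℝ E = l)
    (hprim : ∀ x : Fin n → ℝ, (∀ i, ∃ m : ℤ, x i = m) → x ∈ E → x ∈ L)
    (π : (Fin n → ℝ) →ₗ[ℝ] (Fin n → ℝ))
    (hπ : ∀ x, (∀ v ∈ E, dotp (π x) v = 0) ∧ x - π x ∈ E)
    (K : Set (Fin n → ℝ))
    (hK : K = π '' {x | ∀ i, ∃ m : ℤ, x i = m})
    (Vor : Set (Fin n → ℝ))
    (hVor : Vor = {y | (∀ v ∈ E, dotp y v = 0) ∧
        ∀ v ∈ K, v ≠ 0 → euclNorm y ≤ euclNorm (y - v)}) :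
    ∀ y₁ ∈ Vor, ∀ y₂ ∈ Vor, euclNorm (y₁ - y₂) ≤ Real.sqrt ((n : ℝ) - l) := by
  have hln : (l : ℝ) ≤ (n : ℝ) := by exact_mod_cast hl.le
  have hnl0 : (0:ℝ) ≤ (n : ℝ) - l := by linarith
  -- π vanishes on E
  have hπE : ∀ e ∈ E, π e = 0 := by
    intro e heE
    have h2 := (hπ e).2
    have haE : π e ∈ E := by
      have : π e = e - (e - π e) := by abel
      rw [this]; exact E.sub_mem heE h2
    exact dotp_self_eq_zero ((hπ e).1 (π e) haE)
  -- π is a contraction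
  have hπle : ∀ w : Fin n → ℝ, euclNorm (π w) ≤ euclNorm w := by
    intro w
    apply euclNorm_mono
    have hsum : π w + (w - π w) = w := by abel
    have := dotp_add_self (π w) (w - π w)
    rw [hsum] at this
    have hcross : dotp (π w) (w - π w) = 0 := (hπ w).1 _ (hπ w).2
    have hnn := dotp_self_nonneg (w - π w)
    rw [this, hcross]; linarith
  -- key bound for Voronoi points
  have key : ∀ y ∈ Vor, euclNorm y ≤ Real.sqrt ((n:ℝ) - l) / 2 := by
    intro y hy
    rw [hVor] at hy
    obtain ⟨hyE, hyV⟩ := hy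
    -- π fixes y
    have hπy : π y = y := by
      have hbE : y - π y ∈ E := (hπ y).2
      have h1 : dotp (y - π y) (y - π y) = 0 := by
        rw [dotp_sub_left, hyE _ hbE, (hπ y).1 _ hbE]; ring
      have := dotp_self_eq_zero h1
      have := sub_eq_zero.mp this
      exact this.symm
    obtain ⟨S, hScard, hSsurj⟩ := exists_S E hrank
    obtain ⟨e, heE, he⟩ := hSsurj (-y)
    set x : Fin n → ℝ := y + e with hxdef
    have hxS : ∀ j ∈ S, x j = 0 := by
      intro j hj
      have := he j hj
      simp only [Pi.neg_apply] at this
      simp [hxdef, Pi.add_apply, this]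
    set z : Fin n → ℝ := fun j => if j ∈ S then 0 else (round (x j) : ℝ) with hzdef
    have hzK : π z ∈ K := by
      rw [hK]
      refine ⟨z, ?_, rfl⟩
      intro i
      by_cases h : i ∈ S
      · exact ⟨0, by simp [hzdef, h]⟩
      · exact ⟨round (x i), by simp [hzdef, h]⟩
    -- distance bound
    have hdxz : dotp (x - z) (x - z) ≤ ((n:ℝ) - l) / 4 := by
      have hterm : ∀ i ∈ (Finset.univ : Finset (Fin n)),
          (x - z) i * (x - z) i ≤ (if i ∈ S then (0:ℝ) else 1/4) := by
        intro i _
        by_cases h : i ∈ S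
        · have hx0 : x i = 0 := hxS i h
          have hz0 : z i = 0 := by simp [hzdef, h]
          simp [Pi.sub_apply, hx0, hz0, h]
        · rw [if_neg h]
          have h1 : (x - z) i = x i - round (x i) := by
            simp [Pi.sub_apply, hzdef, h]
          have habs := abs_sub_round (x i)
          have h2 := abs_le.mp habs
          rw [h1]
          nlinarith [h2.1, h2.2]
      have hle := Finset.sum_le_sum hterm
      have hsum : ∑ i, (if i ∈ S then (0:ℝ) else 1/4) = ((n:ℝ) - l) / 4 := by
        rw [← Finset.sum_add_sum_compl S,
          Finset.sum_congr rfl (fun i h => if_pos h),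
          Finset.sum_congr rfl (fun i (h : i ∈ Sᶜ) => if_neg (Finset.mem_compl.mp h))]
        simp only [Finset.sum_const, Finset.sum_const_zero, zero_add, nsmul_eq_mul,
          Finset.card_compl, Fintype.card_fin, hScard]
        rw [Nat.cast_sub hl.le]
        ring
      calc dotp (x - z) (x - z) = ∑ i, (x - z) i * (x - z) i := rfl
        _ ≤ ∑ i, (if i ∈ S then (0:ℝ) else 1/4) := hle
        _ = ((n:ℝ) - l) / 4 := hsum
    have hxz : euclNorm (x - z) ≤ Real.sqrt ((n:ℝ) - l) / 2 := by
      have h1 : euclNorm (x - z) ≤ Real.sqrt (((n:ℝ) - l) / 4) := Real.sqrt_le_sqrt hdxz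
      have h2 : Real.sqrt (((n:ℝ) - l) / 4) = Real.sqrt ((n:ℝ) - l) / 2 := by
        rw [show ((n:ℝ) - l) / 4 = ((n:ℝ) - l) / (2:ℝ)^2 by norm_num,
          Real.sqrt_div hnl0, Real.sqrt_sq (by norm_num : (0:ℝ) ≤ 2)]
      rwa [h2] at h1
    -- y - π z = π (x - z)
    have heq : y - π z = π (x - z) := by
      rw [map_sub, hxdef, map_add, hπy, hπE e heE, add_zero]
    have hbound : euclNorm (y - π z) ≤ Real.sqrt ((n:ℝ) - l) / 2 := by
      rw [heq]
      exact le_trans (hπle _) hxz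
    by_cases hz0 : π z = 0
    · rw [hz0, sub_zero] at hbound
      exact hbound
    · exact le_trans (hyV _ hzK hz0) hbound
  intro y₁ hy₁ y₂ hy₂
  have h1 := key y₁ hy₁
  have h2 := key y₂ hy₂
  have h3 := euclNorm_sub_le y₁ y₂
  linarith
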